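/- Massey's bound: For any random variable X on a finite alphabet with Shannon entropy H(X) \geq 2 bits, the guesswork satisfies G(X) \geq \frac{1}{4} 2^{H(X)} + 1. -/

import Mathlib

open Finset


lemma gibbs_aux {n : ℕ} (p q : Fin n → ℝ) (hp0 : ∀ k, 0 ≤ p k) (hq0 : ∀ k, 0 < q k)
    (hp1 : ∑ k, p k = 1) (hq1 : ∑ k, q k ≤ 1) :
    ∑ k, p k * Real.log (q k) ≤ ∑ k, p k * Real.log (p k) := by
  have key : ∀ k : Fin n, p k * Real.log (q k) - p k * Real.log (p k) ≤ q k - p k := by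
    intro k
    rcases eq_or_lt_of_le (hp0 k) with h | h
    · simp [← h]
      exact (hq0 k).le
    · have hlog : Real.log (q k) - Real.log (p k) = Real.log (q k / p k) :=
        (Real.log_div (hq0 k).ne' h.ne').symm
      rw [← mul_sub, hlog]
      have h2 : Real.log (q k / p k) ≤ q k / p k - 1 :=
        Real.log_le_sub_one_of_pos (div_pos (hq0 k) h)
      have h3 : p k * Real.log (q k / p k) ≤ p k * (q k / p k - 1) := by
        exact mul_le_mul_of_nonneg_left h2 h.le
      have h4 : p k * (q k / p k - 1) = q k - p k := by field_simp
      linarith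
  have hsum := Finset.sum_le_sum (fun k (_ : k ∈ Finset.univ) => key k)
  rw [Finset.sum_sub_distrib] at hsum
  have : ∑ k, (q k - p k) = (∑ k, q k) - 1 := by rw [Finset.sum_sub_distrib, hp1]
  rw [this] at hsum
  linarith

lemma key_ineq {t : ℝ} (ht : 1 ≤ t) :
    (t + 1) * (Real.log (t + 1) - Real.log t) ≤ 2 * Real.log 2 := by
  set f : ℝ → ℝ := fun x => (x + 1) * (Real.log (x + 1) - Real.log x) with hf
  have hderiv : ∀ x : ℝ, 0 < x →
      HasDerivAt f ((Real.log (x + 1) - Real.log x) + (x + 1) * ((x + 1)⁻¹ - x⁻¹)) x := by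
    intro x hx
    have h1 : HasDerivAt (fun y : ℝ => y + 1) 1 x := (hasDerivAt_id x).add_const 1
    have hx1 : x + 1 ≠ 0 := by positivity
    have hlog1 : HasDerivAt (fun y : ℝ => Real.log (y + 1)) ((x + 1)⁻¹) x := by
      have := (Real.hasDerivAt_log hx1).comp x h1
      simpa [Function.comp_def] using this
    have hlog2 : HasDerivAt Real.log x⁻¹ x := Real.hasDerivAt_log hx.ne'
    have h2 : HasDerivAt (fun y : ℝ => Real.log (y + 1) - Real.log y) ((x + 1)⁻¹ - x⁻¹) x :=
      hlog1.sub hlog2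
    have := h1.mul h2
    rw [one_mul] at this
    exact this
  have hanti : AntitoneOn f (Set.Ici 1) := by
    have hint : interior (Set.Ici (1:ℝ)) = Set.Ioi 1 := interior_Ici
    apply antitoneOn_of_deriv_nonpos (convex_Ici 1)
    · intro x hx
      have hx0 : (0:ℝ) < x := lt_of_lt_of_le one_pos hx
      exact (hderiv x hx0).continuousAt.continuousWithinAt
    · rw [hint]
      intro x hx
      have hx0 : (0:ℝ) < x := lt_trans one_pos hx
      exact (hderiv x hx0).differentiableAt.differentiableWithinAt
    · rw [hint]
      intro x hx
      have hx0 : (0:ℝ) < x := lt_trans one_pos hx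
      rw [(hderiv x hx0).deriv]
      have hlog : Real.log (x + 1) - Real.log x = Real.log ((x + 1) / x) :=
        (Real.log_div (by positivity) hx0.ne').symm
      have h2 : Real.log ((x + 1) / x) ≤ (x + 1) / x - 1 :=
        Real.log_le_sub_one_of_pos (by positivity)
      have h3 : (x + 1) * ((x + 1)⁻¹ - x⁻¹) = -(1 / x) := by field_simp; ring
      have h4 : (x + 1) / x - 1 = 1 / x := by field_simp; ring
      rw [hlog, h3]
      linarith
  have h := hanti (Set.self_mem_Ici) (by exact ht) ht
  simp only [hf, Real.log_one] at h
  norm_num at h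
  linarith

lemma geom_aux {r : ℝ} (h0 : 0 ≤ r) (h1 : r < 1) (n : ℕ) :
    (1 - r) * ∑ i ∈ Finset.range n, r ^ i ≤ 1 := by
  rw [geom_sum_eq h1.ne]
  have h2 : (1 - r) * ((r ^ n - 1) / (r - 1)) = 1 - r ^ n := by
    have hne1 : r - 1 ≠ 0 := by linarith
    field_simp
    ring
  rw [h2]
  have : (0:ℝ) ≤ r ^ n := by positivity
  linarith

open Fintype in
theorem massey_bound {X : Type*} [Fintype X] [Nonempty X]
    (p : X → ℝ) (hp0 : ∀ x, 0 ≤ p x) (hp1 : ∑ x, p x = 1)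
    (H : ℝ) (hH : H = -∑ x, p x * Real.logb 2 (p x)) (hH2 : 2 ≤ H) :
    (1 / 4) * (2 : ℝ) ^ H + 1 ≤
      ⨅ σ : Fin (card X) ≃ X, ∑ k : Fin (card X), (((k : ℕ) : ℝ) + 1) * p (σ k) := by
  have hne : Nonempty (Fin (card X) ≃ X) := ⟨(Fintype.equivFin X).symm⟩
  apply le_ciInf
  intro σ
  set L := Real.log 2 with hL
  have hL0 : (0:ℝ) < L := Real.log_pos one_lt_two
  set B : ℝ := (2:ℝ) ^ (H - 2) with hB
  have hB1 : (1:ℝ) ≤ B := by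
    rw [hB]
    calc (1:ℝ) = (2:ℝ) ^ (0:ℝ) := by norm_num
      _ ≤ (2:ℝ) ^ (H - 2) := Real.rpow_le_rpow_of_exponent_le one_le_two (by linarith)
  have hB0 : (0:ℝ) < B := lt_of_lt_of_le one_pos hB1
  have h4 : (2:ℝ) ^ (2:ℝ) = 4 := by
    have := Real.rpow_natCast (2:ℝ) 2
    norm_num at this
    linarith
  have hBgoal : (1 / 4) * (2:ℝ) ^ H = B := by
    rw [hB, Real.rpow_sub two_pos, h4]
    ring
  set r : ℝ := B / (B + 1) with hr
  have hr0 : (0:ℝ) < r := by positivity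
  have hr1 : r < 1 := by
    rw [hr, div_lt_one (by positivity)]; linarith
  have h1r : 1 - r = 1 / (B + 1) := by
    rw [hr]; field_simp; ring
  have h1r0 : (0:ℝ) < 1 - r := by linarith
  set p' : Fin (card X) → ℝ := fun k => p (σ k) with hp'
  set q : Fin (card X) → ℝ := fun k => (1 - r) * r ^ (k : ℕ) with hq
  have hp'0 : ∀ k, 0 ≤ p' k := fun k => hp0 _
  have hp'1 : ∑ k, p' k = 1 := (Equiv.sum_comp σ p).trans hp1
  have hq0 : ∀ k, 0 < q k := fun k => by
    rw [hq]; positivity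
  have hq1 : ∑ k, q k ≤ 1 := by
    have heq : ∑ k : Fin (card X), q k = (1 - r) * ∑ i ∈ Finset.range (card X), r ^ i := by
      rw [hq, ← Finset.mul_sum, Fin.sum_univ_eq_sum_range]
    rw [heq]
    exact geom_aux hr0.le hr1 _
  have hHn : H * L = -∑ k, p' k * Real.log (p' k) := by
    have h1 : ∑ x, p x * Real.logb 2 (p x) = (∑ x, p x * Real.log (p x)) / L := by
      rw [Finset.sum_div]
      congr 1
      ext x
      rw [Real.logb, hL]
      ring
    have h2 : ∑ k, p' k * Real.log (p' k) = ∑ x, p x * Real.log (p x) :=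
      Equiv.sum_comp σ (fun x => p x * Real.log (p x))
    rw [h2, hH, h1]
    field_simp
  have hgibbs := gibbs_aux p' q hp'0 hq0 hp'1 hq1
  set S : ℝ := ∑ k : Fin (card X), ((k : ℕ) : ℝ) * p' k with hS
  have hql : ∑ k, p' k * Real.log (q k) = Real.log (1 - r) + S * Real.log r := by
    have hterm : ∀ k : Fin (card X), p' k * Real.log (q k)
        = Real.log (1 - r) * p' k + Real.log r * (((k:ℕ):ℝ) * p' k) := by
      intro k
      rw [hq]
      rw [Real.log_mul h1r0.ne' (by positivity), Real.log_pow]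
      ring
    rw [Finset.sum_congr rfl (fun k _ => hterm k), Finset.sum_add_distrib,
      ← Finset.mul_sum, ← Finset.mul_sum, hp'1, ← hS]
    ring
  rw [hql] at hgibbs
  have hmain : H * L + Real.log (1 - r) ≤ S * (Real.log (B+1) - Real.log B) := by
    have hlr : Real.log r = Real.log B - Real.log (B + 1) := by
      rw [hr, Real.log_div hB0.ne' (by positivity)]
    rw [hlr] at hgibbs
    nlinarith [hHn]
  have hlog1r : Real.log (1 - r) = -Real.log (B + 1) := by
    rw [h1r, Real.log_div one_ne_zero (by positivity), Real.log_one]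
    ring
  have hlogB : Real.log B = (H - 2) * L := by
    rw [hB, hL, Real.log_rpow two_pos]
  have hd0 : 0 < Real.log (B + 1) - Real.log B :=
    sub_pos.mpr (Real.log_lt_log hB0 (by linarith))
  have hkey := key_ineq hB1
  have hBS : B ≤ S := by
    have h5 : B * (Real.log (B+1) - Real.log B) ≤ H * L - Real.log (B + 1) := by
      rw [hlogB]
      nlinarith
    rw [hlog1r] at hmain
    exact le_of_mul_le_mul_right (by linarith) hd0
  have hgoal : ∑ k : Fin (card X), (((k : ℕ) : ℝ) + 1) * p' k = S + 1 := by
    have hterm : ∀ k : Fin (card X), (((k : ℕ) : ℝ) + 1) * p' k = ((k:ℕ):ℝ) * p' k + p' k := by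
      intro k; ring
    rw [Finset.sum_congr rfl (fun k _ => hterm k), Finset.sum_add_distrib, hp'1, ← hS]
  rw [hBgoal]
  calc B + 1 ≤ S + 1 := by linarith
    _ = ∑ k : Fin (card X), (((k : ℕ) : ℝ) + 1) * p' k := hgoal.symm
    _ = ∑ k : Fin (card X), (((k : ℕ) : ℝ) + 1) * p (σ k) := rfl
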